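/- For any square-free monomial g of degree d in m variables, the cardinality of the orbit of g under LTA(m,2) equals 2^{d + |λ_g|}, where |λ_g| = Σ_{k=1}^{d} (i_k - (k-1)) for g = x_{i_1}···x_{i_d} with i_1 < ... < i_d. -/

import Mathlib

open MvPolynomial

/-- The ring `R_m = F_2[x_0,…,x_{m-1}]/(x_i^2 - x_i)`. -/
def Rring (m : ℕ) : Type :=
  MvPolynomial (Fin m) (ZMod 2) ⧸
    Ideal.span { P : MvPolynomial (Fin m) (ZMod 2) | ∃ i, P = X i ^ 2 - X i }

noncomputable instance (m : ℕ) : CommRing (Rring m) := Ideal.Quotient.commRing _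
noncomputable instance (m : ℕ) : Algebra (ZMod 2) (Rring m) := Ideal.Quotient.algebra _

/-- The class in `R_m` of a polynomial. -/
noncomputable def rmk {m : ℕ} (P : MvPolynomial (Fin m) (ZMod 2)) : Rring m :=
  Ideal.Quotient.mk _ P

/-- `A` is lower unitriangular. -/
def LowerUni {m : ℕ} (A : Matrix (Fin m) (Fin m) (ZMod 2)) : Prop :=
  (∀ i, A i i = 1) ∧ (∀ i j : Fin m, i < j → A i j = 0)

/-- Image of the variable `x_i` under the affine substitution `(A,b)`:
`∑_j a_{ij} x_j + b_i` (which is `x_i + ∑_{j<i} a_{ij} x_j + b_i` when `A` is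
lower unitriangular). -/
noncomputable def subVar {m : ℕ} (A : Matrix (Fin m) (Fin m) (ZMod 2))
    (b : Fin m → ZMod 2) (i : Fin m) : MvPolynomial (Fin m) (ZMod 2) :=
  (∑ j, C (A i j) * X j) + C (b i)

/-- The orbit in `R_m` of the monomial `g` under the action of `LTA(m,2)` by
substitution. -/
noncomputable def orbitLTA {m : ℕ} (g : Finset (Fin m)) : Set (Rring m) :=
  { P | ∃ A b, LowerUni A ∧ P = rmk (∏ i ∈ g, subVar A b i) }

/-- Membership in the subgroup `LTA(m,2)_g`: `b_i = 0` for `i ∉ ind(g)` and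
`a_{ij} = 0` (off the diagonal) whenever `i ∉ ind(g)` or `j ∈ ind(g)`. -/
def stabCond {m : ℕ} (g : Finset (Fin m)) (A : Matrix (Fin m) (Fin m) (ZMod 2))
    (b : Fin m → ZMod 2) : Prop :=
  (∀ i, i ∉ g → b i = 0) ∧
  (∀ i j : Fin m, i ≠ j → (i ∉ g ∨ j ∈ g) → A i j = 0)


namespace OrbitAux
variable {m : ℕ}

noncomputable abbrev Ig (m : ℕ) : Ideal (MvPolynomial (Fin m) (ZMod 2)) :=
  Ideal.span { P : MvPolynomial (Fin m) (ZMod 2) | ∃ i, P = X i ^ 2 - X i }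

lemma rmk_def (P : MvPolynomial (Fin m) (ZMod 2)) : rmk P = Ideal.Quotient.mk (Ig m) P := rfl

lemma rmk_eq_iff {P Q : MvPolynomial (Fin m) (ZMod 2)} :
    rmk P = rmk Q ↔ P - Q ∈ Ig m := by
  rw [rmk_def, rmk_def]; exact Ideal.Quotient.eq

lemma zmod2_sq : ∀ a : ZMod 2, a * a = a := by decide

lemma two_eq_zero' : (2 : MvPolynomial (Fin m) (ZMod 2)) = 0 := by
  have h : (2 : ZMod 2) = 0 := by decide
  rw [← map_ofNat (C : ZMod 2 →+* MvPolynomial (Fin m) (ZMod 2)) 2, h, map_zero]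

lemma affine_sq_mem (c : Fin m → ZMod 2) (c0 : ZMod 2) :
    ((∑ j, C (c j) * X j) + C c0) ^ 2 - ((∑ j, C (c j) * X j) + C c0) ∈ Ig m := by
  have key : ∀ s : Finset (Fin m),
      ((∑ j ∈ s, C (c j) * X j) + C c0) ^ 2 - ((∑ j ∈ s, C (c j) * X j) + C c0) ∈ Ig m := by
    intro s
    induction s using Finset.induction with
    | empty =>
      simp only [Finset.sum_empty, zero_add]
      rw [← map_pow, ← map_sub]
      have : c0 ^ 2 - c0 = 0 := by revert c0; decide
      rw [this, map_zero]; exact zero_mem _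
    | @insert a s ha ih =>
      rw [Finset.sum_insert ha]
      have h2 : (2 : MvPolynomial (Fin m) (ZMod 2)) = 0 := two_eq_zero'
      have hax : (C (c a) * X a) ^ 2 - C (c a) * X a ∈ Ig m := by
        have hmem : (X a ^ 2 - X a : MvPolynomial (Fin m) (ZMod 2)) ∈ Ig m :=
          Ideal.subset_span ⟨a, rfl⟩
        have hmul := Ideal.mul_mem_left _ (C (c a)) hmem
        have hc : C (c a) * (X a ^ 2 - X (R := ZMod 2) a) = (C (c a) * X a) ^ 2 - C (c a) * X a := by
          have hsq : (C (c a) : MvPolynomial (Fin m) (ZMod 2)) ^ 2 = C (c a) := by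
            rw [sq, ← map_mul, zmod2_sq (c a)]
          rw [mul_pow, hsq, mul_sub]
        rwa [hc] at hmul
      have expand :
          (C (c a) * X a + ((∑ j ∈ s, C (c j) * X j) + C c0)) ^ 2
              - (C (c a) * X a + ((∑ j ∈ s, C (c j) * X j) + C c0))
            = ((C (c a) * X a) ^ 2 - C (c a) * X a)
              + (((∑ j ∈ s, C (c j) * X j) + C c0) ^ 2 - ((∑ j ∈ s, C (c j) * X j) + C c0)) := by
        linear_combination ((C (c a) * X a) * ((∑ j ∈ s, C (c j) * X j) + C c0)) * h2
      rw [add_assoc, expand]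
      exact add_mem hax ih
  exact key Finset.univ

lemma subVar_sq_mem (A : Matrix (Fin m) (Fin m) (ZMod 2)) (b : Fin m → ZMod 2) (i : Fin m) :
    (subVar A b i) ^ 2 - subVar A b i ∈ Ig m :=
  affine_sq_mem _ _

lemma prod_rowop {g : Finset (Fin m)} (f : Fin m → MvPolynomial (Fin m) (ZMod 2))
    {i j : Fin m} (hi : i ∈ g) (hj : j ∈ g) (hij : i ≠ j)
    (hsq : (f j) ^ 2 - f j ∈ Ig m) :
    rmk (∏ t ∈ g, f t) = rmk (∏ t ∈ g, Function.update f i (f i + f j + 1) t) := by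
  have hj' : j ∈ g.erase i := Finset.mem_erase.mpr ⟨hij.symm, hj⟩
  set rest := ∏ t ∈ (g.erase i).erase j, f t with hrest
  have hsplit : ∏ t ∈ g, f t = f i * (f j * rest) := by
    rw [← Finset.mul_prod_erase _ _ hi, ← Finset.mul_prod_erase _ _ hj']
  have hsplit2 : ∏ t ∈ g, Function.update f i (f i + f j + 1) t
      = (f i + f j + 1) * (f j * rest) := by
    rw [← Finset.mul_prod_erase _ _ hi, Function.update_self]
    congr 1
    rw [← Finset.mul_prod_erase _ _ hj', Function.update_of_ne (Finset.mem_erase.mp hj').1]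
    congr 1
    exact Finset.prod_congr rfl fun t ht =>
      Function.update_of_ne (Finset.mem_erase.mp (Finset.mem_erase.mp ht).2).1 _ _
  rw [rmk_eq_iff, hsplit, hsplit2]
  have h2 : (2 : MvPolynomial (Fin m) (ZMod 2)) = 0 := two_eq_zero'
  have : f i * (f j * rest) - (f i + f j + 1) * (f j * rest)
      = ((f j) ^ 2 - f j) * (-rest) - (f j * rest) * 2 := by ring
  rw [this, h2, mul_zero, sub_zero]
  exact Ideal.mul_mem_right _ _ hsq


/-- Row operation: add row `j` to row `i` and adjust `b`. -/
noncomputable def ropA (A : Matrix (Fin m) (Fin m) (ZMod 2)) (i j : Fin m) :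
    Matrix (Fin m) (Fin m) (ZMod 2) :=
  Matrix.updateRow A i (A i + A j)

noncomputable def ropb (b : Fin m → ZMod 2) (i j : Fin m) : Fin m → ZMod 2 :=
  Function.update b i (b i + b j + 1)

lemma subVar_congr_row {A A' : Matrix (Fin m) (Fin m) (ZMod 2)} {b b' : Fin m → ZMod 2}
    {i : Fin m} (hA : ∀ j, A i j = A' i j) (hb : b i = b' i) :
    subVar A b i = subVar A' b' i := by
  unfold subVar
  rw [hb]
  congr 1
  exact Finset.sum_congr rfl fun j _ => by rw [hA j]

lemma subVar_rop_self (A : Matrix (Fin m) (Fin m) (ZMod 2)) (b : Fin m → ZMod 2)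
    (i j : Fin m) :
    subVar (ropA A i j) (ropb b i j) i = subVar A b i + subVar A b j + 1 := by
  unfold subVar ropA ropb
  rw [Matrix.updateRow_self, Function.update_self]
  simp only [Pi.add_apply, map_add, add_mul, Finset.sum_add_distrib, map_one]
  ring

lemma subVar_rop_other (A : Matrix (Fin m) (Fin m) (ZMod 2)) (b : Fin m → ZMod 2)
    (i j t : Fin m) (ht : t ≠ i) :
    subVar (ropA A i j) (ropb b i j) t = subVar A b t := by
  unfold subVar ropA ropb
  rw [Matrix.updateRow_ne ht, Function.update_of_ne ht]

lemma rop_lowerUni {A : Matrix (Fin m) (Fin m) (ZMod 2)} (hA : LowerUni A)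
    {i j : Fin m} (hj : j < i) : LowerUni (ropA A i j) := by
  obtain ⟨h1, h2⟩ := hA
  constructor
  · intro t
    by_cases ht : t = i
    · subst ht
      rw [ropA, Matrix.updateRow_self, Pi.add_apply, h1, h2 j t hj, add_zero]
    · rw [ropA, Matrix.updateRow_ne ht, h1]
  · intro t k htk
    by_cases ht : t = i
    · subst ht
      rw [ropA, Matrix.updateRow_self, Pi.add_apply, h2 t k htk, h2 j k (hj.trans htk), add_zero]
    · rw [ropA, Matrix.updateRow_ne ht]
      exact h2 t k htk

lemma rop_prod_eq {g : Finset (Fin m)} (A : Matrix (Fin m) (Fin m) (ZMod 2))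
    (b : Fin m → ZMod 2) {i j : Fin m} (hi : i ∈ g) (hj : j ∈ g) (hij : i ≠ j) :
    rmk (∏ t ∈ g, subVar A b t) = rmk (∏ t ∈ g, subVar (ropA A i j) (ropb b i j) t) := by
  have hfun : ∀ t, subVar (ropA A i j) (ropb b i j) t
      = Function.update (subVar A b) i (subVar A b i + subVar A b j + 1) t := by
    intro t
    by_cases ht : t = i
    · subst ht
      rw [subVar_rop_self, Function.update_self]
    · rw [subVar_rop_other A b i j t ht, Function.update_of_ne ht]
  rw [Finset.prod_congr rfl fun t _ => hfun t]
  exact prod_rowop (subVar A b) hi hj hij (subVar_sq_mem A b j)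

/-- Clean row `i`: kill the entries `A i j` with `j ∈ g`, `j ≠ i`, working down
from column `k`. -/
lemma clean_row (g : Finset (Fin m)) (i : Fin m) (hi : i ∈ g) :
    ∀ (k : ℕ) (A : Matrix (Fin m) (Fin m) (ZMod 2)) (b : Fin m → ZMod 2),
      LowerUni A → (∀ j : Fin m, j ∈ g → j ≠ i → k ≤ j.val → A i j = 0) →
      ∃ A' b', LowerUni A' ∧ (∀ t, t ≠ i → A' t = A t ∧ b' t = b t) ∧
        (∀ j, j ∈ g → j ≠ i → A' i j = 0) ∧
        rmk (∏ t ∈ g, subVar A b t) = rmk (∏ t ∈ g, subVar A' b' t) := by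
  intro k
  induction k with
  | zero =>
    intro A b hA hcl
    exact ⟨A, b, hA, fun t _ => ⟨rfl, rfl⟩, fun j hj hji => hcl j hj hji (Nat.zero_le _), rfl⟩
  | succ k ih =>
    intro A b hA hcl
    by_cases hex : ∃ jk : Fin m, jk.val = k ∧ jk ∈ g ∧ jk ≠ i ∧ A i jk = 1
    · obtain ⟨jk, hkval, hkg, hki, hone⟩ := hex
      have hjk_lt : jk < i := by
        rcases lt_trichotomy jk i with h | h | h
        · exact h
        · exact absurd h hki
        · exact absurd (hA.2 i jk h) (by rw [hone]; exact one_ne_zero)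
      set A1 := ropA A i jk with hA1
      set b1 := ropb b i jk with hb1
      have hA1u : LowerUni A1 := rop_lowerUni hA hjk_lt
      have hcl1 : ∀ j : Fin m, j ∈ g → j ≠ i → k ≤ j.val → A1 i j = 0 := by
        intro j hjg hjine hkj
        rw [hA1, ropA, Matrix.updateRow_self, Pi.add_apply]
        rcases eq_or_lt_of_le hkj with heq | hlt
        · have : j = jk := Fin.ext (by omega)
          subst this
          rw [hone, hA.1]
          decide
        · have hjkj : jk < j := by rw [Fin.lt_def]; omega
          rw [hcl j hjg hjine (by omega), hA.2 jk j hjkj, add_zero]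
      obtain ⟨A', b', hA'u, hother, hclean, heq⟩ := ih A1 b1 hA1u hcl1
      refine ⟨A', b', hA'u, ?_, hclean, ?_⟩
      · intro t ht
        obtain ⟨h1, h2⟩ := hother t ht
        constructor
        · rw [h1, hA1, ropA, Matrix.updateRow_ne ht]
        · rw [h2, hb1, ropb, Function.update_of_ne ht]
      · exact (rop_prod_eq A b hi hkg (Ne.symm hki)).trans heq
    · push_neg at hex
      apply ih A b hA
      intro j hjg hjine hkj
      rcases eq_or_lt_of_le hkj with heq | hlt
      · have hj0 : j.val = k := heq.symm
        have := hex j hj0 hjg hjine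
        rcases (by decide : ∀ a : ZMod 2, a = 0 ∨ a = 1) (A i j) with h | h
        · exact h
        · exact absurd h this
      · exact hcl j hjg hjine (by omega)

lemma clean_rows (g : Finset (Fin m)) :
    ∀ s : Finset (Fin m), s ⊆ g → ∀ (A : Matrix (Fin m) (Fin m) (ZMod 2)) (b : Fin m → ZMod 2),
      LowerUni A →
      ∃ A' b', LowerUni A' ∧ (∀ i ∈ s, ∀ j, j ∈ g → j ≠ i → A' i j = 0) ∧
        rmk (∏ t ∈ g, subVar A b t) = rmk (∏ t ∈ g, subVar A' b' t) := by
  intro s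
  induction s using Finset.induction with
  | empty =>
    intro _ A b hA
    exact ⟨A, b, hA, fun i hi => absurd hi (Finset.notMem_empty i), rfl⟩
  | @insert a s ha ih =>
    intro hsub A b hA
    have hag : a ∈ g := hsub (Finset.mem_insert_self a s)
    obtain ⟨A1, b1, hA1u, hcl1, heq1⟩ := ih (fun x hx => hsub (Finset.mem_insert_of_mem hx)) A b hA
    obtain ⟨A2, b2, hA2u, hother, hcl2, heq2⟩ :=
      clean_row g a hag m A1 b1 hA1u (fun j _ _ hmj => absurd j.isLt (by omega))
    refine ⟨A2, b2, hA2u, ?_, heq1.trans heq2⟩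
    intro i hi j hjg hji
    rcases Finset.mem_insert.mp hi with rfl | his
    · exact hcl2 j hjg hji
    · have hia : i ≠ a := fun h => ha (h ▸ his)
      rw [(hother i hia).1]
      exact hcl1 i his j hjg hji


/-- Every product can be brought to canonical (stabCond) form. -/
lemma to_canonical (g : Finset (Fin m)) (A : Matrix (Fin m) (Fin m) (ZMod 2))
    (b : Fin m → ZMod 2) (hA : LowerUni A) :
    ∃ A' b', LowerUni A' ∧ stabCond g A' b' ∧
      rmk (∏ t ∈ g, subVar A b t) = rmk (∏ t ∈ g, subVar A' b' t) := by
  obtain ⟨A1, b1, hA1u, hcl, heq⟩ := clean_rows g g Finset.Subset.rfl A b hA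
  classical
  refine ⟨fun i j => if i ∈ g then A1 i j else (if i = j then 1 else 0),
    fun i => if i ∈ g then b1 i else 0, ?_, ?_, ?_⟩
  · constructor
    · intro i
      by_cases hig : i ∈ g <;> simp [hig, hA1u.1 i]
    · intro i j hij
      by_cases hig : i ∈ g
      · simp only [hig, if_true]; exact hA1u.2 i j hij
      · simp [hig, Fin.ne_of_lt hij]
  · constructor
    · intro i hig; simp [hig]
    · intro i j hij hcase
      by_cases hig : i ∈ g
      · rcases hcase with h | h
        · exact absurd hig h
        · simp only [hig, if_true]
          exact hcl i hig j h (fun e => hij e.symm)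
      · simp [hig, hij]
  · rw [heq]
    apply congrArg
    apply Finset.prod_congr rfl
    intro t ht
    exact subVar_congr_row (fun j => by simp [ht]) (by simp [ht])

/-- Evaluation at a point, well defined on `Rring m`. -/
noncomputable def evalR (x : Fin m → ZMod 2) : Rring m →+* ZMod 2 :=
  Ideal.Quotient.lift (Ig m) (eval x) (by
    intro p hp
    rw [← RingHom.mem_ker]
    refine Ideal.span_le.mpr ?_ hp
    rintro q ⟨i, rfl⟩
    simp only [SetLike.mem_coe, RingHom.mem_ker, map_sub, map_pow, eval_X]
    revert x
    intro x
    have : ∀ a : ZMod 2, a ^ 2 - a = 0 := by decide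
    exact this (x i))

lemma evalR_rmk (x : Fin m → ZMod 2) (P : MvPolynomial (Fin m) (ZMod 2)) :
    evalR x (rmk P) = eval x P := rfl

lemma eval_subVar (x : Fin m → ZMod 2) (A : Matrix (Fin m) (Fin m) (ZMod 2))
    (b : Fin m → ZMod 2) (i : Fin m) :
    eval x (subVar A b i) = (∑ j, A i j * x j) + b i := by
  simp [subVar]

lemma zmod2_cases : ∀ a : ZMod 2, a = 0 ∨ a = 1 := by decide

/-- Canonical forms are uniquely determined by their class in `R_m`. -/
lemma canonical_inj (g : Finset (Fin m)) {A A' : Matrix (Fin m) (Fin m) (ZMod 2)}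
    {b b' : Fin m → ZMod 2} (hA : LowerUni A) (hs : stabCond g A b)
    (hA' : LowerUni A') (hs' : stabCond g A' b')
    (heq : rmk (∏ t ∈ g, subVar A b t) = rmk (∏ t ∈ g, subVar A' b' t)) :
    A = A' ∧ b = b' := by
  classical
  -- the key pointwise identity
  have key : ∀ y : Fin m → ZMod 2, ∀ i ∈ g,
      (∑ j ∈ Finset.univ.filter (· ∉ g), A i j * y j) + b i
        = (∑ j ∈ Finset.univ.filter (· ∉ g), A' i j * y j) + b' i := by
    intro y i hig
    set x : Fin m → ZMod 2 := fun t =>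
      if t ∈ g then 1 + ((∑ j ∈ Finset.univ.filter (· ∉ g), A t j * y j) + b t) else y t with hx
    have factor_eval : ∀ (B : Matrix (Fin m) (Fin m) (ZMod 2)) (c : Fin m → ZMod 2),
        LowerUni B → stabCond g B c → ∀ t ∈ g,
        eval x (subVar B c t) = x t + ((∑ j ∈ Finset.univ.filter (· ∉ g), B t j * y j) + c t) := by
      intro B c hB hc t htg
      rw [eval_subVar]
      rw [← Finset.sum_filter_add_sum_filter_not Finset.univ (· ∈ g) (fun j => B t j * x j)]
      have h1 : ∑ j ∈ Finset.univ.filter (· ∈ g), B t j * x j = x t := by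
        rw [Finset.sum_eq_single t]
        · rw [hB.1 t, one_mul]
        · intro j hj hjt
          rw [hc.2 t j (Ne.symm hjt) (Or.inr (Finset.mem_filter.mp hj).2), zero_mul]
        · intro h
          exact absurd (Finset.mem_filter.mpr ⟨Finset.mem_univ t, htg⟩) h
      have h2 : ∑ j ∈ Finset.univ.filter (· ∉ g), B t j * x j
          = ∑ j ∈ Finset.univ.filter (· ∉ g), B t j * y j := by
        apply Finset.sum_congr rfl
        intro j hj
        have : x j = y j := by
          rw [hx]; simp [(Finset.mem_filter.mp hj).2]
        rw [this]
      rw [h1, h2, add_assoc]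
    have eval_one : ∀ t ∈ g, eval x (subVar A b t) = 1 := by
      intro t htg
      rw [factor_eval A b hA hs t htg, hx]
      simp only [htg, if_true]
      have : ∀ a : ZMod 2, (1 + a) + a = 1 := by decide
      exact this _
    have prod_one : eval x (∏ t ∈ g, subVar A b t) = 1 := by
      rw [map_prod]
      exact Finset.prod_eq_one eval_one
    have prod_one' : eval x (∏ t ∈ g, subVar A' b' t) = 1 := by
      have := congrArg (evalR x) heq
      rw [evalR_rmk, evalR_rmk] at this
      rw [← this, prod_one]
    have factor_one' : eval x (subVar A' b' i) = 1 := by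
      rw [map_prod] at prod_one'
      by_contra hne
      have h0 : eval x (subVar A' b' i) = 0 := by
        rcases zmod2_cases (eval x (subVar A' b' i)) with h | h
        · exact h
        · exact absurd h hne
      rw [Finset.prod_eq_zero hig h0] at prod_one'
      exact absurd prod_one' (by decide)
    rw [factor_eval A' b' hA' hs' i hig, hx] at factor_one'
    simp only [hig, if_true] at factor_one'
    -- factor_one' : (1 + (S + b i)) + (S' + b' i) = 1
    have cancel : ∀ u v : ZMod 2, (1 + u) + v = 1 → u = v := by decide
    exact cancel _ _ factor_one'
  have hb : ∀ i, b i = b' i := by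
    intro i
    by_cases hig : i ∈ g
    · have := key 0 i hig
      simpa using this
    · rw [hs.1 i hig, hs'.1 i hig]
  have hAeq : ∀ i j, A i j = A' i j := by
    intro i j
    by_cases hij : i = j
    · subst hij; rw [hA.1, hA'.1]
    · by_cases hcase : i ∉ g ∨ j ∈ g
      · rw [hs.2 i j hij hcase, hs'.2 i j hij hcase]
      · push_neg at hcase
        obtain ⟨hig, hjg⟩ := hcase
        have := key (Pi.single j 1 : Fin m → ZMod 2) i hig
        rw [hb i] at this
        have hsum : ∀ B : Matrix (Fin m) (Fin m) (ZMod 2),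
            (∑ t ∈ Finset.univ.filter (· ∉ g), B i t * (Pi.single j 1 : Fin m → ZMod 2) t) = B i j := by
          intro B
          rw [Finset.sum_eq_single j]
          · rw [Pi.single_eq_same, mul_one]
          · intro t _ htj
            rw [Pi.single_eq_of_ne htj, mul_zero]
          · intro h
            exact absurd (Finset.mem_filter.mpr ⟨Finset.mem_univ j, hjg⟩) h
        rw [hsum A, hsum A'] at this
        exact add_right_cancel this
  exact ⟨funext fun i => funext fun j => hAeq i j, funext hb⟩


section Counting
variable (g : Finset (Fin m))

open Classical in
/-- Free positions of the matrix part. -/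
noncomputable def Fpos : Finset (Fin m × Fin m) :=
  Finset.univ.filter (fun q : Fin m × Fin m => q.1 ∈ g ∧ q.2 ∉ g ∧ q.2 < q.1)

open Classical in
lemma mem_Fpos (q : Fin m × Fin m) : q ∈ Fpos g ↔ q.1 ∈ g ∧ q.2 ∉ g ∧ q.2 < q.1 := by
  simp [Fpos]

open Classical in
/-- Number of free below-diagonal positions in row `i`. -/
noncomputable def Nrow (i : Fin m) : Finset (Fin m) :=
  Finset.univ.filter (fun j : Fin m => j ∉ g ∧ j < i)

open Classical in
lemma mem_Nrow (i j : Fin m) : j ∈ Nrow g i ↔ j ∉ g ∧ j < i := by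
  simp [Nrow]

open Classical in
lemma card_Fpos : (Fpos g).card = ∑ i ∈ g, (Nrow g i).card := by
  rw [Finset.card_eq_sum_card_fiberwise (f := Prod.fst) (t := g)
    (fun q hq => ((mem_Fpos g q).mp hq).1)]
  refine Finset.sum_congr rfl fun i hi => ?_
  refine Finset.card_bij' (fun q _ => q.2) (fun j hj => (i, j)) ?_ ?_ ?_ ?_
  · intro q hq
    simp only [Finset.mem_filter] at hq
    obtain ⟨hqF, hq1⟩ := hq
    obtain ⟨_, h2, h3⟩ := (mem_Fpos g q).mp hqF
    exact (mem_Nrow g i q.2).mpr ⟨h2, hq1 ▸ h3⟩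
  · intro j hj
    obtain ⟨h1, h2⟩ := (mem_Nrow g i j).mp hj
    exact Finset.mem_filter.mpr ⟨(mem_Fpos g (i, j)).mpr ⟨hi, h1, h2⟩, rfl⟩
  · intro q hq
    simp only [Finset.mem_filter] at hq
    exact Prod.ext hq.2.symm rfl
  · intro j hj
    rfl

open Classical in
lemma rank_sorted (k : ℕ) (hk : k < (g.sort (· ≤ ·)).length) :
    (g.filter (fun j => j < (g.sort (· ≤ ·))[k])).card = k := by
  set L := g.sort (· ≤ ·) with hL
  have hnd : L.Nodup := g.sort_nodup (· ≤ ·)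
  have hslt : L.Pairwise (· < ·) := g.sortedLT_sort.pairwise
  have hset : g.filter (fun j => j < L[k]) = (L.take k).toFinset := by
    ext j
    simp only [Finset.mem_filter, List.mem_toFinset]
    constructor
    · rintro ⟨hjg, hjlt⟩
      have hjL : j ∈ L := (Finset.mem_sort _).mpr hjg
      obtain ⟨k', hk', rfl⟩ := List.mem_iff_getElem.mp hjL
      have hk'k : k' < k := by
        by_contra h
        push_neg at h
        rcases eq_or_lt_of_le h with h' | h'
        · subst h'; exact lt_irrefl _ hjlt
        · have := hslt.rel_get_of_lt (a := ⟨k, hk⟩) (b := ⟨k', hk'⟩) h'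
          simp only [List.get_eq_getElem] at this
          exact absurd hjlt (asymm this)
      exact List.mem_take_iff_getElem.mpr ⟨k', by omega, rfl⟩
    · intro hmem
      obtain ⟨k', hk', hval⟩ := List.mem_take_iff_getElem.mp hmem
      have hk'L : k' < L.length := by omega
      have hjL : j ∈ L := by rw [← hval]; exact List.getElem_mem _
      refine ⟨(Finset.mem_sort _).mp hjL, ?_⟩
      rw [← hval]
      exact hslt.rel_get_of_lt (a := ⟨k', hk'L⟩) (b := ⟨k, hk⟩) (by simp; omega)
  rw [hset, List.toFinset_card_of_nodup (hnd.sublist (List.take_sublist k L)),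
    List.length_take]
  omega

open Classical in
lemma card_Nrow_sorted (k : ℕ) (hk : k < (g.sort (· ≤ ·)).length) :
    (Nrow g ((g.sort (· ≤ ·))[k])).card = ((g.sort (· ≤ ·))[k]).val - k ∧
      k ≤ ((g.sort (· ≤ ·))[k]).val := by
  set L := g.sort (· ≤ ·) with hL
  set i := L[k] with hi
  have htotal : (Finset.univ.filter (fun j : Fin m => j < i)).card = i.val := by
    have : Finset.univ.filter (fun j : Fin m => j < i) = Finset.Iio i := by
      ext j; simp
    rw [this, Fin.card_Iio]
  have hsplit : (Finset.univ.filter (fun j : Fin m => j < i)).card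
      = (g.filter (fun j => j < i)).card + (Nrow g i).card := by
    rw [← Finset.card_union_of_disjoint (Finset.disjoint_left.mpr
      (fun a ha hb => ((mem_Nrow g i a).mp hb).1 (Finset.mem_filter.mp ha).1))]
    congr 1
    ext j
    by_cases hj : j ∈ g <;> simp [Nrow, hj]
  have hrank := rank_sorted g k hk
  rw [hrank] at hsplit
  rw [htotal] at hsplit
  constructor
  · omega
  · omega


open Classical in
lemma sum_lambda :
    ∑ k ∈ Finset.range g.card, (((g.sort (· ≤ ·)).map Fin.val).getD k 0 - k)
      = ∑ i ∈ g, (Nrow g i).card := by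
  set L := g.sort (· ≤ ·) with hL
  have hlen : L.length = g.card := Finset.length_sort _
  have hslt : L.Pairwise (· < ·) := g.sortedLT_sort.pairwise
  refine Finset.sum_bij (fun k hk => L[k]'(by rw [hlen]; exact Finset.mem_range.mp hk))
    ?_ ?_ ?_ ?_
  · intro k hk
    exact (Finset.mem_sort _).mp (List.getElem_mem _)
  · intro k1 h1 k2 h2 heq
    by_contra hne
    rcases Nat.lt_or_ge k1 k2 with h | h
    · have := hslt.rel_get_of_lt (a := ⟨k1, by rw [hlen]; exact Finset.mem_range.mp h1⟩)
        (b := ⟨k2, by rw [hlen]; exact Finset.mem_range.mp h2⟩) (by simpa using h)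
      simp only [List.get_eq_getElem] at this
      exact ne_of_lt this heq
    · rcases Nat.eq_or_lt_of_le h with h' | h'
      · exact hne h'.symm
      · have := hslt.rel_get_of_lt (a := ⟨k2, by rw [hlen]; exact Finset.mem_range.mp h2⟩)
          (b := ⟨k1, by rw [hlen]; exact Finset.mem_range.mp h1⟩) (by simpa using h')
        simp only [List.get_eq_getElem] at this
        exact ne_of_lt this heq.symm
  · intro i hi
    have hiL : i ∈ L := (Finset.mem_sort _).mpr hi
    obtain ⟨k, hk, rfl⟩ := List.mem_iff_getElem.mp hiL
    exact ⟨k, Finset.mem_range.mpr (by omega), rfl⟩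
  · intro k hk
    have hk' : k < L.length := by rw [hlen]; exact Finset.mem_range.mp hk
    have hgetd : (L.map Fin.val).getD k 0 = (L[k]'hk').val := by
      rw [List.getD_eq_getElem _ _ (by rw [List.length_map]; exact hk'), List.getElem_map]
    obtain ⟨hcard, hle⟩ := card_Nrow_sorted g k hk'
    have hcard' : (Nrow g (L[k]'hk')).card = (L[k]'hk').val - k := hcard
    have hle' : k ≤ (L[k]'hk').val := hle
    show (L.map Fin.val).getD k 0 - k = (Nrow g (L[k]'hk')).card
    omega

open Classical in
noncomputable def SP : Finset (Matrix (Fin m) (Fin m) (ZMod 2) × (Fin m → ZMod 2)) :=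
  Finset.univ.filter (fun p => LowerUni p.1 ∧ stabCond g p.1 p.2)

open Classical in
lemma mem_SP (p : Matrix (Fin m) (Fin m) (ZMod 2) × (Fin m → ZMod 2)) :
    p ∈ SP g ↔ LowerUni p.1 ∧ stabCond g p.1 p.2 := by
  simp [SP]

open Classical in
lemma card_SP : (SP g).card = 2 ^ (g.card + (Fpos g).card) := by
  have hcard : (SP g).card =
      (Finset.univ : Finset (({x // x ∈ g} → ZMod 2) × ({q // q ∈ Fpos g} → ZMod 2))).card := by
    refine Finset.card_bij'
      (fun p _ => (fun t => p.2 t.1, fun q => p.1 q.1.1 q.1.2))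
      (fun fp _ => (fun a c => if a = c then 1 else
          if h : (a, c) ∈ Fpos g then fp.2 ⟨(a, c), h⟩ else 0,
        fun a => if h : a ∈ g then fp.1 ⟨a, h⟩ else 0)) ?_ ?_ ?_ ?_
    · intro p hp
      exact Finset.mem_univ _
    · intro fp _
      refine (mem_SP g _).mpr ⟨⟨?_, ?_⟩, ?_, ?_⟩
      · intro a; simp
      · intro a c hac
        have h1 : a ≠ c := Fin.ne_of_lt hac
        have h2 : (a, c) ∉ Fpos g := fun h =>
          absurd ((mem_Fpos g _).mp h).2.2 (asymm hac)
        simp only [if_neg h1, dif_neg h2]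
      · intro a hag
        simp only [dif_neg hag]
      · intro a c hac hcase
        have h2 : (a, c) ∉ Fpos g := fun h => by
          obtain ⟨x1, x2, _⟩ := (mem_Fpos g _).mp h
          rcases hcase with h' | h'
          · exact h' x1
          · exact x2 h'
        simp only [if_neg hac, dif_neg h2]
    · intro p hp
      obtain ⟨hLU, hst⟩ := (mem_SP g p).mp hp
      refine Prod.ext ?_ ?_
      · funext a c
        simp only
        by_cases hac : a = c
        · subst hac; rw [if_pos rfl, hLU.1]
        · rw [if_neg hac]
          by_cases hF : (a, c) ∈ Fpos g
          · rw [dif_pos hF]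
          · rw [dif_neg hF]
            by_cases hag : a ∈ g
            · by_cases hcg : c ∈ g
              · exact (hst.2 a c hac (Or.inr hcg)).symm
              · have hlt : ¬ c < a := fun hlt =>
                  hF ((mem_Fpos g _).mpr ⟨hag, hcg, hlt⟩)
                have : a < c := by
                  rcases lt_trichotomy a c with h | h | h
                  · exact h
                  · exact absurd h hac
                  · exact absurd h hlt
                exact (hLU.2 a c this).symm
            · exact (hst.2 a c hac (Or.inl hag)).symm
      · funext a
        simp only
        by_cases hag : a ∈ g
        · rw [dif_pos hag]
        · rw [dif_neg hag, hst.1 a hag]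
    · intro fp _
      refine Prod.ext ?_ ?_
      · funext t
        simp only
        rw [dif_pos t.2]
      · funext q
        obtain ⟨⟨a, c⟩, hq⟩ := q
        simp only
        have hac : a ≠ c := by
          have := ((mem_Fpos g _).mp hq).2.2
          exact fun h => by subst h; exact lt_irrefl _ this
        rw [if_neg hac, dif_pos hq]
  rw [hcard, Finset.card_univ, Fintype.card_prod, Fintype.card_fun, Fintype.card_fun,
    Fintype.card_coe, Fintype.card_coe]
  have : Fintype.card (ZMod 2) = 2 := rfl
  rw [this, pow_add]

open Classical in
lemma orbit_eq : orbitLTA g = ↑((SP g).image (fun p => rmk (∏ i ∈ g, subVar p.1 p.2 i))) := by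
  ext P
  simp only [Finset.coe_image, Set.mem_image, Finset.mem_coe, orbitLTA, Set.mem_setOf_eq]
  constructor
  · rintro ⟨A, b, hA, rfl⟩
    obtain ⟨A', b', hA', hs', heq⟩ := to_canonical g A b hA
    exact ⟨(A', b'), (mem_SP g _).mpr ⟨hA', hs'⟩, heq.symm⟩
  · rintro ⟨⟨A, b⟩, hp, rfl⟩
    exact ⟨A, b, ((mem_SP g _).mp hp).1, rfl⟩

end Counting
end OrbitAux

/-- the orbit of a degree-`d` monomial `g = x_{i_1}⋯x_{i_d}`
(`i_1 < … < i_d`) under `LTA(m,2)` has cardinality `2^{d + |λ_g|}`, where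
`|λ_g| = ∑_{k=1}^{d} (i_k - (k-1))` (sum over the 0-indexed positions of the
sorted index sequence of `g`). -/
theorem orbit_card_eq {m : ℕ} (g : Finset (Fin m)) :
    Nat.card (orbitLTA g) =
      2 ^ (g.card + ∑ k ∈ Finset.range g.card,
        (((g.sort (· ≤ ·)).map Fin.val).getD k 0 - k)) := by
  classical
  rw [OrbitAux.orbit_eq g, Nat.card_coe_set_eq, Set.ncard_coe_finset]
  have hinj : Set.InjOn (fun p : Matrix (Fin m) (Fin m) (ZMod 2) × (Fin m → ZMod 2) =>
      rmk (∏ i ∈ g, subVar p.1 p.2 i)) ↑(OrbitAux.SP g) := by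
    intro p hp q hq heq
    simp only [Finset.mem_coe] at hp hq
    obtain ⟨hpL, hps⟩ := (OrbitAux.mem_SP g p).mp hp
    obtain ⟨hqL, hqs⟩ := (OrbitAux.mem_SP g q).mp hq
    obtain ⟨h1, h2⟩ := OrbitAux.canonical_inj g hpL hps hqL hqs heq
    exact Prod.ext h1 h2
  rw [Finset.card_image_of_injOn hinj, OrbitAux.card_SP g]
  congr 2
  rw [OrbitAux.card_Fpos g, ← OrbitAux.sum_lambda g]
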